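/- Let (fₙ) be a sequence of Henstock–Kurzweil integrable functions on [a,b] with fₙ → f pointwise almost everywhere, fₙ ≤ f_{n+1} almost everywhere for every n, and supₙ ∫fₙ < ∞ (HK integrals). Then f is HK integrable on [a,b] and ∫f = limₙ ∫fₙ. -/

import Mathlib

def IsTaggedPartition (a b : ℝ) (n : ℕ) (t x : ℕ → ℝ) : Prop :=
  t 0 = a ∧ t n = b ∧ (∀ j < n, t j < t (j + 1)) ∧
    ∀ j < n, x j ∈ Set.Icc (t j) (t (j + 1))

def IsFine (δ : ℝ → ℝ) (n : ℕ) (t x : ℕ → ℝ) : Prop :=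
  ∀ j < n, t (j + 1) - t j < δ (x j)

def RiemannSum (g : ℝ → ℝ) (n : ℕ) (t x : ℕ → ℝ) : ℝ :=
  ∑ j ∈ Finset.range n, g (x j) * (t (j + 1) - t j)

/-- `f` is Henstock–Kurzweil integrable on `[a,b]` with integral `α`. -/
def HKIntegral (a b : ℝ) (f : ℝ → ℝ) (α : ℝ) : Prop :=
  ∀ ε > 0, ∃ δ : ℝ → ℝ, (∀ y ∈ Set.Icc a b, 0 < δ y) ∧
    ∀ (n : ℕ) (t x : ℕ → ℝ), IsTaggedPartition a b n t x → IsFine δ n t x →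
      |RiemannSum f n t x - α| < ε


namespace HKAux

lemma t_mono {a b : ℝ} {n : ℕ} {t x : ℕ → ℝ} (h : IsTaggedPartition a b n t x)
    {i j : ℕ} (hij : i ≤ j) (hj : j ≤ n) : t i ≤ t j := by
  obtain ⟨-, -, hs, -⟩ := h
  induction j with
  | zero => simp_all
  | succ k ih =>
    rcases Nat.eq_or_lt_of_le hij with rfl | hlt
    · exact le_refl _
    · exact le_trans (ih (Nat.lt_succ_iff.mp hlt) (le_trans (Nat.le_succ k) hj))
        (le_of_lt (hs k (Nat.lt_of_succ_le hj)))

lemma t_mem {a b : ℝ} {n : ℕ} {t x : ℕ → ℝ} (h : IsTaggedPartition a b n t x)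
    {j : ℕ} (hj : j ≤ n) : t j ∈ Set.Icc a b := by
  constructor
  · rw [← h.1]; exact t_mono h (Nat.zero_le j) hj
  · rw [← h.2.1]; exact t_mono h hj le_rfl

lemma tag_mem {a b : ℝ} {n : ℕ} {t x : ℕ → ℝ} (h : IsTaggedPartition a b n t x)
    {j : ℕ} (hj : j < n) : x j ∈ Set.Icc a b := by
  obtain ⟨hl, hr⟩ := h.2.2.2 j hj
  exact ⟨le_trans (t_mem h hj.le).1 hl, le_trans hr (t_mem h hj).2⟩

lemma sum_lengths {a b : ℝ} {n : ℕ} {t x : ℕ → ℝ} (h : IsTaggedPartition a b n t x) :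
    ∑ j ∈ Finset.range n, (t (j + 1) - t j) = b - a := by
  rw [Finset.sum_range_sub, h.1, h.2.1]

lemma length_nonneg {a b : ℝ} {n : ℕ} {t x : ℕ → ℝ} (h : IsTaggedPartition a b n t x)
    {j : ℕ} (hj : j < n) : 0 ≤ t (j + 1) - t j :=
  sub_nonneg.mpr (h.2.2.1 j hj).le

lemma isFine_mono {δ δ' : ℝ → ℝ} {n : ℕ} {t x : ℕ → ℝ}
    (hle : ∀ j < n, δ (x j) ≤ δ' (x j)) (h : IsFine δ n t x) : IsFine δ' n t x :=
  fun j hj => lt_of_lt_of_le (h j hj) (hle j hj)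

/-- Concatenation of two tagged partitions. -/
lemma concat {a c d : ℝ} {n₁ n₂ : ℕ} {t₁ x₁ t₂ x₂ : ℕ → ℝ}
    (h1 : IsTaggedPartition a c n₁ t₁ x₁) (h2 : IsTaggedPartition c d n₂ t₂ x₂) :
    ∃ t x : ℕ → ℝ, IsTaggedPartition a d (n₁ + n₂) t x ∧
      (∀ δ : ℝ → ℝ, IsFine δ n₁ t₁ x₁ → IsFine δ n₂ t₂ x₂ → IsFine δ (n₁ + n₂) t x) ∧
      (∀ g : ℝ → ℝ, RiemannSum g (n₁ + n₂) t x = RiemannSum g n₁ t₁ x₁ + RiemannSum g n₂ t₂ x₂) := by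
  set T : ℕ → ℝ := fun j => if j ≤ n₁ then t₁ j else t₂ (j - n₁) with hT
  set X : ℕ → ℝ := fun j => if j < n₁ then x₁ j else x₂ (j - n₁) with hX
  have eL : ∀ j, j ≤ n₁ → T j = t₁ j := fun j hj => if_pos hj
  have eR : ∀ j, n₁ ≤ j → T j = t₂ (j - n₁) := by
    intro j hj
    rcases Nat.eq_or_lt_of_le hj with rfl | hlt
    · simp [hT, h1.2.1, h2.1]
    · simp [hT, (Nat.not_le.mpr hlt)]
  have hXL : ∀ j, j < n₁ → X j = x₁ j := fun j hj => if_pos hj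
  have hXR : ∀ j, n₁ ≤ j → X j = x₂ (j - n₁) := fun j hj => if_neg (Nat.not_lt.mpr hj)
  have hstep : ∀ j < n₁ + n₂, T j < T (j + 1) ∧ X j ∈ Set.Icc (T j) (T (j + 1)) ∧
      T (j + 1) - T j = (if j < n₁ then t₁ (j+1) - t₁ j else t₂ (j - n₁ + 1) - t₂ (j - n₁)) := by
    intro j hj
    by_cases hc : j < n₁
    · rw [eL j hc.le, eL (j+1) (Nat.succ_le_of_lt hc), hXL j hc, if_pos hc]
      exact ⟨h1.2.2.1 j hc, h1.2.2.2 j hc, rfl⟩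
    · push_neg at hc
      have hj2 : j - n₁ < n₂ := by omega
      have e1 : T j = t₂ (j - n₁) := eR j hc
      have e2 : T (j + 1) = t₂ (j - n₁ + 1) := by
        rw [eR (j+1) (le_trans hc (Nat.le_succ j))]
        congr 1; omega
      rw [e1, e2, hXR j hc, if_neg (Nat.not_lt.mpr hc)]
      exact ⟨h2.2.2.1 _ hj2, h2.2.2.2 _ hj2, rfl⟩
  refine ⟨T, X, ⟨by simp [hT, h1.1], ?_, fun j hj => (hstep j hj).1, fun j hj => (hstep j hj).2.1⟩,
    ?_, ?_⟩
  · rcases Nat.eq_zero_or_pos n₂ with rfl | h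
    · rw [Nat.add_zero, eL n₁ le_rfl, h1.2.1, ← h2.1, h2.2.1]
    · rw [eR (n₁ + n₂) (Nat.le_add_right _ _)]
      simp [h2.2.1]
  · intro δ hf1 hf2 j hj
    have := (hstep j hj).2.2
    by_cases hc : j < n₁
    · rw [this, if_pos hc, hXL j hc]; exact hf1 j hc
    · push_neg at hc
      rw [this, if_neg (Nat.not_lt.mpr hc), hXR j hc]
      exact hf2 _ (by omega)
  · intro g
    unfold RiemannSum
    rw [Finset.range_eq_Ico, ← Finset.sum_Ico_consecutive _ (Nat.zero_le n₁) (Nat.le_add_right n₁ n₂)]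
    congr 1
    · rw [← Finset.range_eq_Ico]
      refine Finset.sum_congr rfl ?_
      intro j hj
      have hj' : j < n₁ := Finset.mem_range.mp hj
      rw [(hstep j (by omega)).2.2, if_pos hj', hXL j hj']
    · rw [Finset.sum_Ico_eq_sum_range]
      simp only [Nat.add_sub_cancel_left]
      refine Finset.sum_congr rfl ?_
      intro i hi
      have hi' : i < n₂ := Finset.mem_range.mp hi
      have h1' : n₁ ≤ n₁ + i := Nat.le_add_right _ _
      have hii : n₁ + i - n₁ = i := by omega
      rw [(hstep (n₁ + i) (by omega)).2.2, if_neg (by omega), hXR _ h1', hii]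

end HKAux

namespace HKAux

lemma single {a b x₀ : ℝ} (hab : a < b) (hx : x₀ ∈ Set.Icc a b) :
    IsTaggedPartition a b 1 (fun j => if j = 0 then a else b) (fun _ => x₀) ∧
    (∀ g : ℝ → ℝ, RiemannSum g 1 (fun j => if j = 0 then a else b) (fun _ => x₀)
      = g x₀ * (b - a)) ∧
    (∀ δ : ℝ → ℝ, b - a < δ x₀ → IsFine δ 1 (fun j => if j = 0 then a else b) (fun _ => x₀)) := by
  refine ⟨⟨by simp, by simp, ?_, ?_⟩, ?_, ?_⟩
  · intro j hj; interval_cases j; simpa using hab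
  · intro j hj; interval_cases j; simpa using hx
  · intro g; simp [RiemannSum]
  · intro δ hδ j hj; interval_cases j; simpa using hδ

/-- Cousin's lemma: existence of a δ-fine tagged partition. -/
lemma cousin {c d : ℝ} (hcd : c ≤ d) {δ : ℝ → ℝ} (hδ : ∀ y ∈ Set.Icc c d, 0 < δ y) :
    ∃ (n : ℕ) (t x : ℕ → ℝ), IsTaggedPartition c d n t x ∧ IsFine δ n t x := by
  set S : Set ℝ := {e | e ∈ Set.Icc c d ∧
    ∃ (n : ℕ) (t x : ℕ → ℝ), IsTaggedPartition c e n t x ∧ IsFine δ n t x} with hS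
  have hcS : c ∈ S := by
    exact ⟨⟨le_rfl, hcd⟩, 0, fun _ => c, fun _ => c,
      ⟨rfl, rfl, fun j hj => absurd hj (Nat.not_lt_zero j), fun j hj => absurd hj (Nat.not_lt_zero j)⟩,
      fun j hj => absurd hj (Nat.not_lt_zero j)⟩
  have hne : S.Nonempty := ⟨c, hcS⟩
  have hbdd : BddAbove S := ⟨d, fun e he => he.1.2⟩
  set s := sSup S with hs
  have hsmem : s ∈ Set.Icc c d := ⟨le_csSup hbdd hcS, csSup_le hne (fun e he => he.1.2)⟩
  have hδs : 0 < δ s := hδ s hsmem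
  obtain ⟨e, heS, he⟩ : ∃ e ∈ S, s - δ s / 2 < e :=
    exists_lt_of_lt_csSup hne (by linarith)
  have heds : e ≤ s := le_csSup hbdd heS
  set d' := min d (s + δ s / 2) with hd'
  have hsd' : s ≤ d' := le_min hsmem.2 (by linarith)
  have hd'S : d' ∈ S := by
    rcases eq_or_lt_of_le (le_trans heds hsd') with heq | hlt
    · rwa [← heq]
    · obtain ⟨nn, tt, xx, hpart, hfine⟩ := heS.2
      have hx0 : s ∈ Set.Icc e d' := ⟨heds, hsd'⟩
      obtain ⟨hp1, hp2, hp3⟩ := single hlt hx0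
      obtain ⟨T, X, hP, hF, -⟩ := concat hpart hp1
      refine ⟨⟨le_trans heS.1.1 (le_trans heds hsd'), min_le_left _ _⟩, nn + 1, T, X, hP, ?_⟩
      refine hF δ hfine (hp3 δ ?_)
      have : d' ≤ s + δ s / 2 := min_le_right _ _
      linarith
  have hd's : d' ≤ s := le_csSup hbdd hd'S
  have hsd : s = d := by
    by_contra hne'
    have hlt : s < d := lt_of_le_of_ne hsmem.2 hne'
    have : s < d' := lt_min hlt (by linarith)
    linarith
  have hδd : 0 < δ d := hsd ▸ hδs
  have : d' = d := by rw [hd', hsd]; exact min_eq_left (by linarith)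
  rw [this] at hd'S
  exact hd'S.2

end HKAux

namespace HKAux

lemma eq_of_abs_lt_all {x : ℝ} (h : ∀ ε > 0, |x| < ε) : x = 0 := by
  by_contra h0
  exact lt_irrefl _ (h |x| (abs_pos.mpr (sub_ne_zero.mp (by simpa using h0))))

lemma hk_degenerate (c : ℝ) (f : ℝ → ℝ) : HKIntegral c c f 0 := by
  intro ε hε
  refine ⟨fun _ => 1, fun y _ => one_pos, ?_⟩
  intro n t x hp hf
  have hn : n = 0 := by
    by_contra hn0
    have h1 : t 0 < t n := by
      calc t 0 < t 1 := hp.2.2.1 0 (Nat.pos_of_ne_zero hn0)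
        _ ≤ t n := t_mono hp (Nat.one_le_iff_ne_zero.mpr hn0) le_rfl
    rw [hp.1, hp.2.1] at h1; exact lt_irrefl _ h1
  subst hn
  simpa [RiemannSum] using hε

lemma hk_unique {c d : ℝ} {f : ℝ → ℝ} {α β : ℝ} (hcd : c ≤ d)
    (h1 : HKIntegral c d f α) (h2 : HKIntegral c d f β) : α = β := by
  have key : ∀ ε > 0, |α - β| < ε := by
    intro ε hε
    obtain ⟨δ1, hδ1, H1⟩ := h1 (ε/2) (by linarith)
    obtain ⟨δ2, hδ2, H2⟩ := h2 (ε/2) (by linarith)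
    obtain ⟨n, t, x, hp, hf⟩ := cousin hcd (δ := fun y => min (δ1 y) (δ2 y))
      (fun y hy => lt_min (hδ1 y hy) (hδ2 y hy))
    have e1 := H1 n t x hp (isFine_mono (δ := fun y => min (δ1 y) (δ2 y)) (δ' := δ1) (fun j hj => min_le_left _ _) hf)
    have e2 := H2 n t x hp (isFine_mono (δ := fun y => min (δ1 y) (δ2 y)) (δ' := δ2) (fun j hj => min_le_right _ _) hf)
    rw [abs_lt] at e1 e2 ⊢
    constructor <;> linarith
  have := eq_of_abs_lt_all key
  linarith [abs_nonneg (α - β), this]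

lemma hk_mono {c d : ℝ} {f g : ℝ → ℝ} {α β : ℝ} (hcd : c ≤ d)
    (h1 : HKIntegral c d f α) (h2 : HKIntegral c d g β)
    (hfg : ∀ y ∈ Set.Icc c d, f y ≤ g y) : α ≤ β := by
  refine le_of_forall_pos_le_add ?_
  intro ε hε
  obtain ⟨δ1, hδ1, H1⟩ := h1 (ε/2) (by linarith)
  obtain ⟨δ2, hδ2, H2⟩ := h2 (ε/2) (by linarith)
  obtain ⟨n, t, x, hp, hf⟩ := cousin hcd (δ := fun y => min (δ1 y) (δ2 y))
    (fun y hy => lt_min (hδ1 y hy) (hδ2 y hy))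
  have e1 := H1 n t x hp (isFine_mono (δ := fun y => min (δ1 y) (δ2 y)) (δ' := δ1) (fun j hj => min_le_left _ _) hf)
  have e2 := H2 n t x hp (isFine_mono (δ := fun y => min (δ1 y) (δ2 y)) (δ' := δ2) (fun j hj => min_le_right _ _) hf)
  have hsum : RiemannSum f n t x ≤ RiemannSum g n t x := by
    refine Finset.sum_le_sum ?_
    intro j hj
    have hj' := Finset.mem_range.mp hj
    exact mul_le_mul_of_nonneg_right (hfg _ (tag_mem hp hj')) (length_nonneg hp hj')
  rw [abs_lt] at e1 e2
  linarith

lemma hk_additivity_eq {a c b : ℝ} {f : ℝ → ℝ} {γ₁ γ₂ α : ℝ}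
    (hac : a ≤ c) (hcb : c ≤ b)
    (h1 : HKIntegral a c f γ₁) (h2 : HKIntegral c b f γ₂) (h : HKIntegral a b f α) :
    α = γ₁ + γ₂ := by
  have key : ∀ ε > 0, |α - (γ₁ + γ₂)| < ε := by
    intro ε hε
    obtain ⟨δ1, hδ1, H1⟩ := h1 (ε/3) (by linarith)
    obtain ⟨δ2, hδ2, H2⟩ := h2 (ε/3) (by linarith)
    obtain ⟨δ0, hδ0, H0⟩ := h (ε/3) (by linarith)
    obtain ⟨n1, t1, x1, hp1, hf1⟩ := cousin hac (δ := fun y => min (δ0 y) (δ1 y))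
      (fun y hy => lt_min (hδ0 y ⟨hy.1, le_trans hy.2 hcb⟩) (hδ1 y hy))
    obtain ⟨n2, t2, x2, hp2, hf2⟩ := cousin hcb (δ := fun y => min (δ0 y) (δ2 y))
      (fun y hy => lt_min (hδ0 y ⟨le_trans hac hy.1, hy.2⟩) (hδ2 y hy))
    obtain ⟨T, X, hP, hF, hSum⟩ := concat hp1 hp2
    have hfine : IsFine δ0 (n1 + n2) T X :=
      hF δ0 (isFine_mono (δ := fun y => min (δ0 y) (δ1 y)) (δ' := δ0) (fun j hj => min_le_left _ _) hf1)
        (isFine_mono (δ := fun y => min (δ0 y) (δ2 y)) (δ' := δ0) (fun j hj => min_le_left _ _) hf2)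
    have e0 := H0 _ T X hP hfine
    have e1 := H1 n1 t1 x1 hp1 (isFine_mono (δ := fun y => min (δ0 y) (δ1 y)) (δ' := δ1) (fun j hj => min_le_right _ _) hf1)
    have e2 := H2 n2 t2 x2 hp2 (isFine_mono (δ := fun y => min (δ0 y) (δ2 y)) (δ' := δ2) (fun j hj => min_le_right _ _) hf2)
    rw [hSum f] at e0
    rw [abs_lt] at e0 e1 e2 ⊢
    constructor <;> linarith
  have h0 := eq_of_abs_lt_all key
  linarith [h0]

end HKAux

namespace HKAux

lemma hk_sub_exists {a b c d : ℝ} {f : ℝ → ℝ} {α : ℝ}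
    (hac : a ≤ c) (hcd : c ≤ d) (hdb : d ≤ b) (h : HKIntegral a b f α) :
    ∃ γ, HKIntegral c d f γ := by
  have hD : ∀ k : ℕ, ∃ δ : ℝ → ℝ, (∀ y ∈ Set.Icc a b, 0 < δ y) ∧
      ∀ (n : ℕ) (t x : ℕ → ℝ), IsTaggedPartition a b n t x → IsFine δ n t x →
        |RiemannSum f n t x - α| < 1/(k+1) := fun k => h (1/(k+1)) (by positivity)
  choose D hDpos hDest using hD
  set δ' : ℕ → ℝ → ℝ := fun k y => (Finset.range (k+1)).inf' ⟨0, by simp⟩ (fun i => D i y)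
    with hδ'
  have hδ'pos : ∀ k, ∀ y ∈ Set.Icc a b, 0 < δ' k y := by
    intro k y hy
    rw [hδ']
    exact Finset.lt_inf'_iff _ |>.mpr (fun i _ => hDpos i y hy)
  have hδ'le : ∀ k i, i ≤ k → ∀ y, δ' k y ≤ D i y := by
    intro k i hik y
    exact Finset.inf'_le _ (Finset.mem_range.mpr (by omega))
  have hδ'mono : ∀ k l, k ≤ l → ∀ y, δ' l y ≤ δ' k y := by
    intro k l hkl y
    refine Finset.le_inf' _ _ ?_
    intro i hi
    exact hδ'le l i (by have := Finset.mem_range.mp hi; omega) y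
  have key : ∀ k : ℕ, ∀ (n : ℕ) (t x : ℕ → ℝ) (n' : ℕ) (t' x' : ℕ → ℝ),
      IsTaggedPartition c d n t x → IsFine (D k) n t x →
      IsTaggedPartition c d n' t' x' → IsFine (D k) n' t' x' →
      |RiemannSum f n t x - RiemannSum f n' t' x'| < 2/(k+1) := by
    intro k n t x n' t' x' hp hf hp' hf'
    obtain ⟨m1, u1, y1, hq1, hg1⟩ := cousin hac (δ := D k)
      (fun y hy => hDpos k y ⟨hy.1, le_trans hy.2 (le_trans hcd hdb)⟩)
    obtain ⟨m2, u2, y2, hq2, hg2⟩ := cousin hdb (δ := D k)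
      (fun y hy => hDpos k y ⟨le_trans (le_trans hac hcd) hy.1, hy.2⟩)
    have full : ∀ (n0 : ℕ) (t0 x0 : ℕ → ℝ), IsTaggedPartition c d n0 t0 x0 →
        IsFine (D k) n0 t0 x0 →
        |RiemannSum f m1 u1 y1 + RiemannSum f n0 t0 x0 + RiemannSum f m2 u2 y2 - α|
          < 1/(k+1) := by
      intro n0 t0 x0 hp0 hf0
      obtain ⟨T1, X1, hP1, hF1, hS1⟩ := concat hq1 hp0
      obtain ⟨T2, X2, hP2, hF2, hS2⟩ := concat hP1 hq2
      have := hDest k _ T2 X2 hP2 (hF2 (D k) (hF1 (D k) hg1 hf0) hg2)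
      rw [hS2 f, hS1 f] at this
      exact this
    have e1 := full n t x hp hf
    have e2 := full n' t' x' hp' hf'
    have h21 : 2/((k:ℝ)+1) = 1/((k:ℝ)+1) + 1/((k:ℝ)+1) := by ring
    rw [abs_lt] at e1 e2 ⊢
    constructor <;> [linarith; linarith]
  have hP : ∀ k : ℕ, ∃ (n : ℕ) (t x : ℕ → ℝ),
      IsTaggedPartition c d n t x ∧ IsFine (δ' k) n t x := fun k =>
    cousin hcd (fun y hy => hδ'pos k y ⟨le_trans hac hy.1, le_trans hy.2 hdb⟩)
  choose N T X hPart hFine using hP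
  set s : ℕ → ℝ := fun k => RiemannSum f (N k) (T k) (X k) with hsdef
  have hCE : ∀ k l, k ≤ l → |s k - s l| < 2/(k+1) := by
    intro k l hkl
    refine key k _ _ _ _ _ _ (hPart k)
      (isFine_mono (δ := δ' k) (δ' := D k) (fun j hj => hδ'le k k le_rfl _) (hFine k))
      (hPart l)
      (isFine_mono (δ := δ' l) (δ' := D k)
        (fun j hj => le_trans (hδ'mono k l hkl _) (hδ'le k k le_rfl _)) (hFine l))
  have hCauchy : CauchySeq s := by
    rw [Metric.cauchySeq_iff']
    intro ε hε
    obtain ⟨K, hK⟩ := exists_nat_gt (2/ε)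
    refine ⟨K, ?_⟩
    intro m hm
    have h2 : 2/(K+1:ℝ) < ε := by
      rw [div_lt_iff₀ (by positivity)]
      have : 2/ε < (K:ℝ) + 1 := by linarith
      calc (2:ℝ) = (2/ε) * ε := by field_simp
        _ < ((K:ℝ)+1) * ε := by
            apply mul_lt_mul_of_pos_right _ hε
            linarith
        _ = ε * ((K:ℝ)+1) := by ring
    have := hCE K m hm
    rw [Real.dist_eq, abs_sub_comm]
    linarith
  obtain ⟨γ, hγ⟩ := cauchySeq_tendsto_of_complete hCauchy
  refine ⟨γ, ?_⟩
  intro ε hε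
  obtain ⟨K, hK⟩ := exists_nat_gt (2/ε)
  have h2 : 2/(K+1:ℝ) < ε := by
    rw [div_lt_iff₀ (by positivity)]
    calc (2:ℝ) = (2/ε) * ε := by field_simp
      _ < ((K:ℝ)+1) * ε := by
          apply mul_lt_mul_of_pos_right _ hε
          linarith
      _ = ε * ((K:ℝ)+1) := by ring
  refine ⟨δ' K, fun y hy => hδ'pos K y ⟨le_trans hac hy.1, le_trans hy.2 hdb⟩, ?_⟩
  intro n t x hp hf
  have hlim : Filter.Tendsto (fun l => |RiemannSum f n t x - s l|) Filter.atTop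
      (nhds |RiemannSum f n t x - γ|) :=
    ((tendsto_const_nhds.sub hγ).abs)
  have hbound : ∀ᶠ l in Filter.atTop, |RiemannSum f n t x - s l| ≤ 2/(K+1) := by
    filter_upwards [Filter.eventually_ge_atTop K] with l hl
    exact le_of_lt (key K n t x _ _ _ hp
      (isFine_mono (δ := δ' K) (δ' := D K) (fun j hj => hδ'le K K le_rfl _) hf)
      (hPart l)
      (isFine_mono (δ := δ' l) (δ' := D K)
        (fun j hj => le_trans (hδ'mono K l hl _) (hδ'le K K le_rfl _)) (hFine l)))
  have := le_of_tendsto hlim hbound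
  linarith
end HKAux

namespace HKAux

open MeasureTheory

/-- Changing a function on a null subset of `[a,b]` does not change the HK integral. -/
lemma hk_congr_ae {a b : ℝ} {f g : ℝ → ℝ} {α : ℝ}
    (hfg : ∀ᵐ y ∂(volume.restrict (Set.Icc a b)), f y = g y)
    (h : HKIntegral a b f α) : HKIntegral a b g α := by
  classical
  set E : Set ℝ := {y | f y ≠ g y} ∩ Set.Icc a b with hEdef
  have hE : volume E = 0 := by
    have := hfg
    rw [MeasureTheory.ae_iff, Measure.restrict_apply' measurableSet_Icc] at this
    exact this
  set K : ℝ → ℕ := fun y => ⌊|g y - f y|⌋₊ with hK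
  intro ε hε
  obtain ⟨δf, hδf, Hf⟩ := h (ε/2) (by linarith)
  -- choose open covers of the level sets of `g - f` on `E`
  set η : ℕ → ℝ := fun k => ε / (((k:ℝ)+1) * 2^(k+2)) with hη
  have hηpos : ∀ k, 0 < η k := by
    intro k
    apply div_pos hε
    positivity
  have hU : ∀ k : ℕ, ∃ U : Set ℝ, (E ∩ {y | K y = k}) ⊆ U ∧ IsOpen U ∧
      volume U < ENNReal.ofReal (η k) := by
    intro k
    have h0 : volume (E ∩ {y | K y = k}) = 0 :=
      le_antisymm (le_trans (measure_mono Set.inter_subset_left) hE.le) (zero_le)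
    obtain ⟨U, hU1, hU2, hU3⟩ := Set.exists_isOpen_lt_of_lt (E ∩ {y | K y = k})
      (ENNReal.ofReal (η k)) (by rw [h0]; exact ENNReal.ofReal_pos.mpr (hηpos k))
    exact ⟨U, hU1, hU2, hU3⟩
  choose U hUsub hUopen hUvol using hU
  have hr : ∀ y : ℝ, ∃ r : ℝ, 0 < r ∧ (y ∈ E → Metric.ball y r ⊆ U (K y)) := by
    intro y
    by_cases hy : y ∈ E
    · obtain ⟨r, hr0, hrb⟩ := Metric.isOpen_iff.mp (hUopen (K y)) y (hUsub (K y) ⟨hy, rfl⟩)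
      exact ⟨r, hr0, fun _ => hrb⟩
    · exact ⟨1, one_pos, fun hy' => absurd hy' hy⟩
  choose r hrpos hrball using hr
  refine ⟨fun y => min (δf y) (r y), fun y hy => lt_min (hδf y hy) (hrpos y), ?_⟩
  intro n t x hp hf
  have hfinef : IsFine δf n t x :=
    isFine_mono (δ := fun y => min (δf y) (r y)) (δ' := δf) (fun j hj => min_le_left _ _) hf
  have h1 := Hf n t x hp hfinef
  -- the error term
  have hdiff : RiemannSum g n t x - RiemannSum f n t x
      = ∑ j ∈ Finset.range n, (g (x j) - f (x j)) * (t (j+1) - t j) := by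
    unfold RiemannSum
    rw [← Finset.sum_sub_distrib]
    congr 1; funext j; ring
  set B : Finset ℕ := (Finset.range n).filter (fun j => x j ∈ E) with hB
  have hzero : ∀ j ∈ (Finset.range n).filter (fun j => ¬ x j ∈ E),
      (g (x j) - f (x j)) * (t (j+1) - t j) = 0 := by
    intro j hj
    obtain ⟨hj1, hj2⟩ := Finset.mem_filter.mp hj
    have hx : x j ∈ Set.Icc a b := tag_mem hp (Finset.mem_range.mp hj1)
    have : f (x j) = g (x j) := by
      by_contra hne
      exact hj2 ⟨hne, hx⟩
    rw [this]; ring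
  have hsplit : ∑ j ∈ Finset.range n, (g (x j) - f (x j)) * (t (j+1) - t j)
      = ∑ j ∈ B, (g (x j) - f (x j)) * (t (j+1) - t j) := by
    rw [← Finset.sum_filter_add_sum_filter_not (Finset.range n) (fun j => x j ∈ E)]
    rw [Finset.sum_eq_zero hzero, add_zero]
  -- each interval with tag in `E ∩ {K = k}` is inside `U k`
  have hsub : ∀ j ∈ B, Set.Ioc (t j) (t (j+1)) ⊆ U (K (x j)) := by
    intro j hj z hz
    obtain ⟨hj1, hj2⟩ := Finset.mem_filter.mp hj
    have hjn := Finset.mem_range.mp hj1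
    have htag := hp.2.2.2 j hjn
    have hflt := hf j hjn
    have hd : |z - x j| < r (x j) := by
      rw [abs_lt]
      constructor
      · have : t j ≥ x j - (t (j+1) - t j) := by
          have := htag.2; have := hz.1; linarith [hz.1]
        have hlen : t (j+1) - t j < r (x j) := lt_of_lt_of_le hflt (min_le_right _ _)
        have := hz.1
        have := htag.2
        linarith
      · have hlen : t (j+1) - t j < r (x j) := lt_of_lt_of_le hflt (min_le_right _ _)
        have := hz.2
        have := htag.1
        linarith
    exact hrball (x j) hj2 (Metric.mem_ball.mpr (by rwa [Real.dist_eq]))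
  -- sum of lengths with tags in a fiber is small
  have hfiber : ∀ k : ℕ, ∑ j ∈ B.filter (fun j => K (x j) = k), (t (j+1) - t j) ≤ η k := by
    intro k
    set F := B.filter (fun j => K (x j) = k) with hF
    have hFsub : F ⊆ Finset.range n := le_trans (Finset.filter_subset _ _) (Finset.filter_subset _ _)
    have hdisj : (F : Set ℕ).PairwiseDisjoint (fun j => Set.Ioc (t j) (t (j+1)))  := by
      intro i hi j hj hij
      have hi' := Finset.mem_range.mp (hFsub hi)
      have hj' := Finset.mem_range.mp (hFsub hj)
      simp only [Function.onFun]
      rw [Set.Ioc_disjoint_Ioc]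
      rcases Nat.lt_or_ge i j with hlt | hge
      · exact le_trans (min_le_left _ _) (le_trans (t_mono hp hlt hj'.le) (le_max_right _ _))
      · have hlt : j < i := lt_of_le_of_ne hge (Ne.symm hij)
        exact le_trans (min_le_right _ _) (le_trans (t_mono hp hlt hi'.le) (le_max_left _ _))
    have hmeas : ENNReal.ofReal (∑ j ∈ F, (t (j+1) - t j)) = volume (⋃ j ∈ F, Set.Ioc (t j) (t (j+1))) := by
      rw [measure_biUnion_finset hdisj (fun j _ => measurableSet_Ioc)]
      rw [ENNReal.ofReal_sum_of_nonneg (fun j hj => length_nonneg hp (Finset.mem_range.mp (hFsub hj)))]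
      refine Finset.sum_congr rfl ?_
      intro j hj
      rw [Real.volume_Ioc]
    have hle : volume (⋃ j ∈ F, Set.Ioc (t j) (t (j+1))) ≤ volume (U k) := by
      refine measure_mono ?_
      refine Set.iUnion₂_subset ?_
      intro j hj
      have hjB : j ∈ B := Finset.mem_of_mem_filter j hj
      have hk : K (x j) = k := (Finset.mem_filter.mp hj).2
      rw [← hk]
      exact hsub j hjB
    have : ENNReal.ofReal (∑ j ∈ F, (t (j+1) - t j)) < ENNReal.ofReal (η k) :=
      lt_of_le_of_lt (hmeas ▸ hle) (hUvol k)
    have := (ENNReal.ofReal_lt_ofReal_iff (hηpos k)).mp this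
    linarith
  -- total error bound
  have hKbound : ∀ j ∈ B, |g (x j) - f (x j)| < (K (x j) : ℝ) + 1 := by
    intro j hj
    exact_mod_cast Nat.lt_floor_add_one |g (x j) - f (x j)|
  set Ks : Finset ℕ := B.image (fun j => K (x j)) with hKs
  have herr : ∑ j ∈ B, |g (x j) - f (x j)| * (t (j+1) - t j) ≤ ε/2 := by
    have hfw : ∑ k ∈ Ks, ∑ j ∈ B.filter (fun j => K (x j) = k),
        |g (x j) - f (x j)| * (t (j+1) - t j)
        = ∑ j ∈ B, |g (x j) - f (x j)| * (t (j+1) - t j) :=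
      Finset.sum_fiberwise_of_maps_to (fun j hj => Finset.mem_image_of_mem _ hj) _
    rw [← hfw]
    have hstep : ∀ k ∈ Ks, ∑ j ∈ B.filter (fun j => K (x j) = k),
        |g (x j) - f (x j)| * (t (j+1) - t j) ≤ (ε/4) * (1/2)^k := by
      intro k _
      have h1 : ∑ j ∈ B.filter (fun j => K (x j) = k),
          |g (x j) - f (x j)| * (t (j+1) - t j)
          ≤ ∑ j ∈ B.filter (fun j => K (x j) = k), ((k:ℝ)+1) * (t (j+1) - t j) := by
        refine Finset.sum_le_sum ?_
        intro j hj
        have hjB := Finset.mem_of_mem_filter j hj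
        have hk : K (x j) = k := (Finset.mem_filter.mp hj).2
        have hjn := Finset.mem_range.mp (Finset.mem_of_mem_filter j hjB)
        refine mul_le_mul_of_nonneg_right ?_ (length_nonneg hp hjn)
        have := hKbound j hjB
        rw [hk] at this
        linarith
      rw [← Finset.mul_sum] at h1
      have h2 := hfiber k
      have h3 : ((k:ℝ)+1) * (∑ j ∈ B.filter (fun j => K (x j) = k), (t (j+1) - t j))
          ≤ ((k:ℝ)+1) * η k :=
        mul_le_mul_of_nonneg_left h2 (by positivity)
      have h4 : ((k:ℝ)+1) * η k = (ε/4) * (1/2)^k := by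
        have hk1 : ((k:ℝ)+1) ≠ 0 := by positivity
        simp only [hη, one_div, inv_pow, pow_add]
        field_simp
        ring
      linarith
    calc ∑ k ∈ Ks, ∑ j ∈ B.filter (fun j => K (x j) = k),
        |g (x j) - f (x j)| * (t (j+1) - t j)
        ≤ ∑ k ∈ Ks, (ε/4) * (1/2)^k := Finset.sum_le_sum hstep
      _ ≤ ∑ k ∈ Finset.range (Ks.sup id + 1), (ε/4) * (1/2)^k := by
          refine Finset.sum_le_sum_of_subset_of_nonneg ?_ ?_
          · intro k hk
            exact Finset.mem_range.mpr (Nat.lt_succ_of_le (Finset.le_sup (f := id) hk))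
          · intro k _ _; positivity
      _ = (ε/4) * ∑ k ∈ Finset.range (Ks.sup id + 1), (1/2)^k := by rw [Finset.mul_sum]
      _ ≤ (ε/4) * 2 := by
          refine mul_le_mul_of_nonneg_left ?_ (by linarith)
          have hgeom := geom_sum_eq (by norm_num : (1/2:ℝ) ≠ 1) (Ks.sup id + 1)
          rw [hgeom]
          have hpow : (0:ℝ) ≤ (1/2)^(Ks.sup id + 1) := by positivity
          have : ((1/2:ℝ)^(Ks.sup id + 1) - 1) / (1/2 - 1) = 2 * (1 - (1/2)^(Ks.sup id + 1)) := by
            ring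
          rw [this]
          linarith
      _ = ε/2 := by ring
  have habs : |RiemannSum g n t x - RiemannSum f n t x| ≤ ε/2 := by
    rw [hdiff, hsplit]
    refine le_trans (Finset.abs_sum_le_sum_abs _ _) ?_
    refine le_trans (Finset.sum_le_sum ?_) herr
    intro j hj
    rw [abs_mul]
    refine mul_le_mul_of_nonneg_left ?_ (abs_nonneg _)
    rw [abs_of_nonneg (length_nonneg hp (Finset.mem_range.mp (Finset.mem_of_mem_filter j hj)))]
  rw [abs_lt] at h1 ⊢
  rw [abs_le] at habs
  constructor <;> linarith

end HKAux

namespace HKAux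

lemma hk_partition_sum {a b : ℝ} {f : ℝ → ℝ} {α : ℝ} (h : HKIntegral a b f α)
    {n : ℕ} {t x : ℕ → ℝ} (hp : IsTaggedPartition a b n t x)
    (I : ℕ → ℝ) (hI : ∀ j < n, HKIntegral (t j) (t (j+1)) f (I j)) :
    ∑ j ∈ Finset.range n, I j = α := by
  have hab : a ≤ b := by rw [← hp.1, ← hp.2.1]; exact t_mono hp (Nat.zero_le n) le_rfl
  have hex : ∀ k : ℕ, ∃ γ, k ≤ n → HKIntegral a (t k) f γ := by
    intro k
    by_cases hk : k ≤ n
    · obtain ⟨γ, hγ⟩ := hk_sub_exists (le_refl a) ((hp.1 ▸ (t_mem hp hk).1 : a ≤ t k))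
        (t_mem hp hk).2 h
      exact ⟨γ, fun _ => hγ⟩
    · exact ⟨0, fun hk' => absurd hk' hk⟩
  choose γ hγ using hex
  have claim : ∀ k, k ≤ n → γ k = ∑ j ∈ Finset.range k, I j := by
    intro k
    induction k with
    | zero =>
      intro _
      have h0 : HKIntegral a (t 0) f (γ 0) := hγ 0 (Nat.zero_le n)
      rw [hp.1] at h0
      simpa using hk_unique (le_refl a) h0 (hk_degenerate a f)
    | succ k ih =>
      intro hk1
      have hkn : k < n := hk1
      have e1 : HKIntegral a (t k) f (γ k) := hγ k hkn.le
      have e2 : HKIntegral (t k) (t (k+1)) f (I k) := hI k hkn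
      have e3 : HKIntegral a (t (k+1)) f (γ (k+1)) := hγ (k+1) hk1
      have := hk_additivity_eq (hp.1 ▸ (t_mem hp hkn.le).1) (hp.2.2.1 k hkn).le e1 e2 e3
      rw [this, ih hkn.le, Finset.sum_range_succ]
  have hn : γ n = ∑ j ∈ Finset.range n, I j := claim n le_rfl
  have hlast : HKIntegral a b f (γ n) := hp.2.1 ▸ hγ n le_rfl
  rw [← hn]
  exact hk_unique hab hlast h

lemma hk_saks_partial {a b : ℝ} {f : ℝ → ℝ} {α ε : ℝ} (hε : 0 < ε)
    {δ : ℝ → ℝ} (hδ : ∀ y ∈ Set.Icc a b, 0 < δ y)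
    (Hδ : ∀ (n : ℕ) (t x : ℕ → ℝ), IsTaggedPartition a b n t x → IsFine δ n t x →
      |RiemannSum f n t x - α| < ε)
    (h : HKIntegral a b f α)
    {n : ℕ} {t x : ℕ → ℝ} (hp : IsTaggedPartition a b n t x)
    (S : Finset ℕ) (hS : ∀ j ∈ S, j < n ∧ t (j+1) - t j < δ (x j))
    (I : ℕ → ℝ) (hI : ∀ j < n, HKIntegral (t j) (t (j+1)) f (I j)) :
    |∑ j ∈ S, (f (x j) * (t (j+1) - t j) - I j)| ≤ ε := by
  classical
  refine le_of_forall_pos_le_add ?_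
  intro η hη
  set η' : ℝ := η / (n+1) with hη'
  have hη'pos : 0 < η' := by positivity
  -- gauges for the subinterval integrals
  have hJ : ∀ j : ℕ, ∃ δj : ℝ → ℝ, j < n →
      ((∀ y ∈ Set.Icc (t j) (t (j+1)), 0 < δj y) ∧
        ∀ (m : ℕ) (u y : ℕ → ℝ), IsTaggedPartition (t j) (t (j+1)) m u y →
          IsFine δj m u y → |RiemannSum f m u y - I j| < η') := by
    intro j
    by_cases hj : j < n
    · obtain ⟨δj, h1, h2⟩ := hI j hj η' hη'pos
      exact ⟨δj, fun _ => ⟨h1, h2⟩⟩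
    · exact ⟨fun _ => 1, fun hj' => absurd hj' hj⟩
  choose δJ hδJ using hJ
  set target : ℕ → ℝ := fun k => (∑ j ∈ (Finset.range k).filter (· ∈ S), f (x j) * (t (j+1) - t j))
    + ∑ j ∈ (Finset.range k).filter (· ∉ S), I j with htarget
  have hIccsub : ∀ k, k < n → Set.Icc (t k) (t (k+1)) ⊆ Set.Icc a b := by
    intro k hk y hy
    exact ⟨le_trans (t_mem hp hk.le).1 hy.1, le_trans hy.2 (t_mem hp hk).2⟩
  have C : ∀ k, k ≤ n → ∃ (m : ℕ) (u y : ℕ → ℝ), IsTaggedPartition a (t k) m u y ∧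
      IsFine δ m u y ∧ |RiemannSum f m u y - target k| ≤ k * η' := by
    intro k
    induction k with
    | zero =>
      intro _
      refine ⟨0, fun _ => t 0, fun _ => t 0, ⟨hp.1, rfl, ?_, ?_⟩, ?_, ?_⟩
      · intro j hj; exact absurd hj (Nat.not_lt_zero j)
      · intro j hj; exact absurd hj (Nat.not_lt_zero j)
      · intro j hj; exact absurd hj (Nat.not_lt_zero j)
      · simp [RiemannSum, htarget]
    | succ k ih =>
      intro hk1
      have hkn : k < n := hk1
      obtain ⟨m, u, y, hpart, hfine, hbound⟩ := ih hkn.le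
      by_cases hkS : k ∈ S
      · -- append the single tagged interval
        obtain ⟨hp1, hp2, hp3⟩ := single (hp.2.2.1 k hkn) (hp.2.2.2 k hkn)
        obtain ⟨T, X, hP, hF, hSum⟩ := concat hpart hp1
        refine ⟨m + 1, T, X, hP, hF δ hfine (hp3 δ (hS k hkS).2), ?_⟩
        rw [hSum f, hp2 f]
        have htstep : target (k+1) = target k + f (x k) * (t (k+1) - t k) := by
          rw [htarget]
          simp only [Finset.range_add_one]
          rw [Finset.filter_insert, Finset.filter_insert, if_pos hkS, if_neg (by simp [hkS]),
            Finset.sum_insert (by simp)]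
          ring
        rw [htstep]
        have : RiemannSum f m u y + f (x k) * (t (k+1) - t k)
            - (target k + f (x k) * (t (k+1) - t k)) = RiemannSum f m u y - target k := by ring
        rw [this]
        refine le_trans hbound ?_
        push_cast
        nlinarith [hη'pos.le]
      · -- append a fine partition of the subinterval
        have hjint := hδJ k hkn
        obtain ⟨m2, u2, y2, hpart2, hfine2⟩ := cousin (hp.2.2.1 k hkn).le
          (δ := fun z => min (δ z) (δJ k z))
          (fun z hz => lt_min (hδ z (hIccsub k hkn hz)) (hjint.1 z hz))
        obtain ⟨T, X, hP, hF, hSum⟩ := concat hpart hpart2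
        refine ⟨m + m2, T, X, hP, hF δ hfine
          (isFine_mono (δ := fun z => min (δ z) (δJ k z)) (δ' := δ)
            (fun j hj => min_le_left _ _) hfine2), ?_⟩
        rw [hSum f]
        have hpiece := hjint.2 m2 u2 y2 hpart2
          (isFine_mono (δ := fun z => min (δ z) (δJ k z)) (δ' := δJ k)
            (fun j hj => min_le_right _ _) hfine2)
        have htstep : target (k+1) = target k + I k := by
          rw [htarget]
          simp only [Finset.range_add_one]
          rw [Finset.filter_insert, Finset.filter_insert, if_neg (by simp [hkS]),
            if_pos hkS, Finset.sum_insert (by simp)]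
          ring
        rw [htstep]
        have heq : RiemannSum f m u y + RiemannSum f m2 u2 y2 - (target k + I k)
            = (RiemannSum f m u y - target k) + (RiemannSum f m2 u2 y2 - I k) := by ring
        rw [heq]
        refine le_trans (abs_add_le _ _) ?_
        push_cast
        have hexp : ((k:ℝ) + 1) * η' = (k:ℝ) * η' + η' := by ring
        linarith [hpiece, hbound]
  obtain ⟨m, u, y, hpart, hfine, hbound⟩ := C n le_rfl
  rw [hp.2.1] at hpart
  have hclose := Hδ m u y hpart hfine
  have hsum_eq : ∑ j ∈ Finset.range n, I j = α := hk_partition_sum h hp I hI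
  have hSsub : S ⊆ Finset.range n := fun j hj => Finset.mem_range.mpr (hS j hj).1
  have hSfilter : (Finset.range n).filter (· ∈ S) = S := by
    rw [Finset.filter_mem_eq_inter]
    exact Finset.inter_eq_right.mpr hSsub
  have hkey : ∑ j ∈ S, (f (x j) * (t (j+1) - t j) - I j) = target n - α := by
    have hα : α = (∑ j ∈ (Finset.range n).filter (· ∈ S), I j)
        + ∑ j ∈ (Finset.range n).filter (· ∉ S), I j := by
      rw [Finset.sum_filter_add_sum_filter_not]
      exact hsum_eq.symm
    rw [htarget, hα]
    simp only [hSfilter]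
    rw [Finset.sum_sub_distrib]
    ring
  rw [hkey]
  have h1 : |target n - α| ≤ |target n - RiemannSum f m u y| + |RiemannSum f m u y - α| := by
    have : target n - α = (target n - RiemannSum f m u y) + (RiemannSum f m u y - α) := by ring
    rw [this]; exact abs_add_le _ _
  rw [abs_sub_comm (target n) (RiemannSum f m u y)] at h1
  have hnη : (n:ℝ) * η' ≤ η := by
    rw [hη']
    rw [div_eq_inv_mul]
    have hn1 : (0:ℝ) < (n:ℝ) + 1 := by positivity
    rw [← mul_assoc]
    have : (n:ℝ) * ((n:ℝ)+1)⁻¹ ≤ 1 := by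
      rw [mul_inv_le_iff₀ hn1]
      linarith
    nlinarith [hη.le]
  linarith

end HKAux


open HKAux MeasureTheory

/-- Monotone convergence theorem for the HK integral on `[a,b]`. -/
theorem hk_monotone_convergence (a b : ℝ) (hab : a ≤ b)
    (f : ℕ → ℝ → ℝ) (g : ℝ → ℝ) (α : ℕ → ℝ)
    (hint : ∀ n, HKIntegral a b (f n) (α n))
    (hmono : ∀ n, ∀ᵐ x ∂(MeasureTheory.volume.restrict (Set.Icc a b)),
      f n x ≤ f (n + 1) x)
    (hlim : ∀ᵐ x ∂(MeasureTheory.volume.restrict (Set.Icc a b)),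
      Filter.Tendsto (fun n => f n x) Filter.atTop (nhds (g x)))
    (hbd : ∃ M : ℝ, ∀ n, α n ≤ M) :
    ∃ β : ℝ, Filter.Tendsto α Filter.atTop (nhds β) ∧ HKIntegral a b g β := by
  classical
  set G : Set ℝ := {y | (∀ n, f n y ≤ f (n+1) y) ∧
    Filter.Tendsto (fun n => f n y) Filter.atTop (nhds (g y))} with hGdef
  have hG : ∀ᵐ y ∂(volume.restrict (Set.Icc a b)), y ∈ G := by
    have h1 : ∀ᵐ y ∂(volume.restrict (Set.Icc a b)), ∀ n, f n y ≤ f (n+1) y :=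
      MeasureTheory.ae_all_iff.mpr hmono
    filter_upwards [h1, hlim] with y hy1 hy2
    exact ⟨hy1, hy2⟩
  set F : ℕ → ℝ → ℝ := fun n y => if y ∈ G then f n y else 0 with hFdef
  set g' : ℝ → ℝ := fun y => if y ∈ G then g y else 0 with hg'def
  have hFint : ∀ n, HKIntegral a b (F n) (α n) := by
    intro n
    refine hk_congr_ae ?_ (hint n)
    filter_upwards [hG] with y hy
    simp [hFdef, hy]
  have hFmono : ∀ n y, F n y ≤ F (n+1) y := by
    intro n y
    by_cases hy : y ∈ G
    · simp only [hFdef, if_pos hy]; exact hy.1 n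
    · simp [hFdef, hy]
  have hFmono' : ∀ y, Monotone (fun n => F n y) :=
    fun y => monotone_nat_of_le_succ (fun n => hFmono n y)
  have hFtend : ∀ y, Filter.Tendsto (fun n => F n y) Filter.atTop (nhds (g' y)) := by
    intro y
    by_cases hy : y ∈ G
    · simp only [hFdef, hg'def, if_pos hy]; exact hy.2
    · simp only [hFdef, hg'def, if_neg hy]; exact tendsto_const_nhds
  have hαmono : Monotone α :=
    monotone_nat_of_le_succ (fun n =>
      hk_mono hab (hFint n) (hFint (n+1)) (fun y _ => hFmono n y))
  obtain ⟨M, hM⟩ := hbd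
  have hbdd : BddAbove (Set.range α) := ⟨M, by rintro _ ⟨n, rfl⟩; exact hM n⟩
  have hβ : Filter.Tendsto α Filter.atTop (nhds (⨆ n, α n)) := tendsto_atTop_ciSup hαmono hbdd
  set A : ℝ := ⨆ n, α n with hAdef
  have hαA : ∀ n, α n ≤ A := fun n => le_ciSup hbdd n
  refine ⟨A, hβ, ?_⟩
  have hgoal : HKIntegral a b g' A := by
    intro ε hε
    -- choose n₀
    obtain ⟨n₀, hn₀⟩ : ∃ n₀, A - ε/4 < α n₀ := exists_lt_of_lt_ciSup (by linarith)
    -- gauges for each F m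
    have hδm : ∀ m : ℕ, ∃ δ : ℝ → ℝ, (∀ y ∈ Set.Icc a b, 0 < δ y) ∧
        ∀ (n : ℕ) (t x : ℕ → ℝ), IsTaggedPartition a b n t x → IsFine δ n t x →
          |RiemannSum (F m) n t x - α m| < ε/8 * (1/2)^m :=
      fun m => hFint m (ε/8 * (1/2)^m) (by positivity)
    choose δm hδmpos Hm using hδm
    set δ' : ℕ → ℝ → ℝ := fun k y => (Finset.range (k+1)).inf' ⟨0, by simp⟩ (fun i => δm i y)
      with hδ'def
    have hδ'pos : ∀ k, ∀ y ∈ Set.Icc a b, 0 < δ' k y := by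
      intro k y hy
      exact Finset.lt_inf'_iff _ |>.mpr (fun i _ => hδmpos i y hy)
    have hδ'le : ∀ k i, i ≤ k → ∀ y, δ' k y ≤ δm i y := by
      intro k i hik y
      exact Finset.inf'_le _ (Finset.mem_range.mpr (by omega))
    -- choose indices N y
    set c : ℝ := ε / (4 * (b - a + 1)) with hcdef
    have hc : 0 < c := by
      apply div_pos hε
      nlinarith
    have hNex : ∀ y : ℝ, ∃ m, n₀ ≤ m ∧ |F m y - g' y| < c := by
      intro y
      obtain ⟨N₀, hN₀⟩ := Metric.tendsto_atTop.mp (hFtend y) c hc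
      refine ⟨max n₀ N₀, le_max_left _ _, ?_⟩
      have := hN₀ (max n₀ N₀) (le_max_right _ _)
      rwa [Real.dist_eq] at this
    choose N hNge hNclose using hNex
    refine ⟨fun y => δ' (N y) y, fun y hy => hδ'pos (N y) y hy, ?_⟩
    intro n t x hp hf
    -- subinterval integrals
    have hIex : ∀ (m j : ℕ), ∃ γ, j < n → HKIntegral (t j) (t (j+1)) (F m) γ := by
      intro m j
      by_cases hj : j < n
      · obtain ⟨γ, hγ⟩ := hk_sub_exists (t_mem hp hj.le).1 (hp.2.2.1 j hj).le
          (t_mem hp hj).2 (hFint m)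
        exact ⟨γ, fun _ => hγ⟩
      · exact ⟨0, fun hj' => absurd hj' hj⟩
    choose I hIs using hIex
    set T1 : ℝ := ∑ j ∈ Finset.range n, (g' (x j) - F (N (x j)) (x j)) * (t (j+1) - t j)
      with hT1
    set T2 : ℝ := ∑ j ∈ Finset.range n,
      (F (N (x j)) (x j) * (t (j+1) - t j) - I (N (x j)) j) with hT2
    set T3 : ℝ := (∑ j ∈ Finset.range n, I (N (x j)) j) - A with hT3
    have hdecomp : RiemannSum g' n t x - A = T1 + T2 + T3 := by
      rw [hT1, hT2, hT3]
      unfold RiemannSum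
      rw [← Finset.sum_add_distrib]
      have : ∀ j ∈ Finset.range n,
          (g' (x j) - F (N (x j)) (x j)) * (t (j+1) - t j)
          + (F (N (x j)) (x j) * (t (j+1) - t j) - I (N (x j)) j)
          = g' (x j) * (t (j+1) - t j) - I (N (x j)) j := by
        intro j _; ring
      rw [Finset.sum_congr rfl this, Finset.sum_sub_distrib]
      ring
    -- T1 bound
    have hT1bound : |T1| ≤ ε/4 := by
      have h1 : |T1| ≤ ∑ j ∈ Finset.range n, c * (t (j+1) - t j) := by
        refine le_trans (Finset.abs_sum_le_sum_abs _ _) (Finset.sum_le_sum ?_)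
        intro j hj
        have hjn := Finset.mem_range.mp hj
        rw [abs_mul, abs_of_nonneg (length_nonneg hp hjn)]
        refine mul_le_mul_of_nonneg_right ?_ (length_nonneg hp hjn)
        rw [abs_sub_comm]
        exact (hNclose (x j)).le
      rw [← Finset.mul_sum, sum_lengths hp] at h1
      have hb1 : (0:ℝ) < b - a + 1 := by linarith
      have h2 : c * (b - a) ≤ c * (b - a + 1) := by nlinarith
      have h3 : c * (b - a + 1) = ε/4 := by
        rw [hcdef, ← div_div]
        exact div_mul_cancel₀ _ (ne_of_gt hb1)
      linarith
    -- T2 bound via Saks-Henstock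
    set Ms : Finset ℕ := (Finset.range n).image (fun j => N (x j)) with hMs
    have hT2bound : |T2| ≤ ε/4 := by
      have hfw : ∑ m ∈ Ms, ∑ j ∈ (Finset.range n).filter (fun j => N (x j) = m),
          (F (N (x j)) (x j) * (t (j+1) - t j) - I (N (x j)) j) = T2 :=
        Finset.sum_fiberwise_of_maps_to (fun j hj => Finset.mem_image_of_mem _ hj) _
      rw [← hfw]
      have hstep : ∀ m ∈ Ms, |∑ j ∈ (Finset.range n).filter (fun j => N (x j) = m),
          (F (N (x j)) (x j) * (t (j+1) - t j) - I (N (x j)) j)| ≤ ε/8 * (1/2)^m := by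
        intro m _
        have hcongr : ∑ j ∈ (Finset.range n).filter (fun j => N (x j) = m),
            (F (N (x j)) (x j) * (t (j+1) - t j) - I (N (x j)) j)
            = ∑ j ∈ (Finset.range n).filter (fun j => N (x j) = m),
            (F m (x j) * (t (j+1) - t j) - I m j) := by
          refine Finset.sum_congr rfl ?_
          intro j hj
          rw [(Finset.mem_filter.mp hj).2]
        rw [hcongr]
        refine hk_saks_partial (by positivity) (hδmpos m) (Hm m) (hFint m) hp _ ?_
          (fun j => I m j) (fun j hj => hIs m j hj)
        intro j hj
        obtain ⟨hj1, hj2⟩ := Finset.mem_filter.mp hj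
        have hjn := Finset.mem_range.mp hj1
        refine ⟨hjn, ?_⟩
        have := hf j hjn
        have hle : δ' (N (x j)) (x j) ≤ δm m (x j) := by
          rw [← hj2]
          exact hδ'le (N (x j)) (N (x j)) le_rfl (x j)
        linarith
      refine le_trans (Finset.abs_sum_le_sum_abs _ _) ?_
      calc ∑ m ∈ Ms, |∑ j ∈ (Finset.range n).filter (fun j => N (x j) = m),
          (F (N (x j)) (x j) * (t (j+1) - t j) - I (N (x j)) j)|
          ≤ ∑ m ∈ Ms, ε/8 * (1/2)^m := Finset.sum_le_sum hstep
        _ ≤ ∑ m ∈ Finset.range (Ms.sup id + 1), ε/8 * (1/2)^m := by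
            refine Finset.sum_le_sum_of_subset_of_nonneg ?_ ?_
            · intro m hm
              exact Finset.mem_range.mpr (Nat.lt_succ_of_le (Finset.le_sup (f := id) hm))
            · intro m _ _; positivity
        _ = (ε/8) * ∑ m ∈ Finset.range (Ms.sup id + 1), (1/2)^m := by
            rw [Finset.mul_sum]
        _ ≤ (ε/8) * 2 := by
            refine mul_le_mul_of_nonneg_left ?_ (by linarith)
            have hgeom := geom_sum_eq (by norm_num : (1/2:ℝ) ≠ 1) (Ms.sup id + 1)
            rw [hgeom]
            have hpow : (0:ℝ) ≤ (1/2)^(Ms.sup id + 1) := by positivity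
            have : ((1/2:ℝ)^(Ms.sup id + 1) - 1) / (1/2 - 1)
                = 2 * (1 - (1/2)^(Ms.sup id + 1)) := by ring
            rw [this]
            linarith
        _ = ε/4 := by ring
    -- T3 bound
    have hT3bound : -(ε/4) < T3 ∧ T3 ≤ 0 := by
      set mtop : ℕ := (Finset.range n).sup (fun j => N (x j)) ⊔ n₀ with hmtop
      have hmle : ∀ j < n, N (x j) ≤ mtop := by
        intro j hj
        have h1 : N (x j) ≤ (Finset.range n).sup (fun j => N (x j)) :=
          Finset.le_sup (f := fun j => N (x j)) (Finset.mem_range.mpr hj)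
        exact le_trans h1 (le_max_left _ _)
      have hn₀le : n₀ ≤ mtop := le_max_right _ _
      have hsum_lo : α n₀ = ∑ j ∈ Finset.range n, I n₀ j :=
        (hk_partition_sum (hFint n₀) hp (fun j => I n₀ j) (fun j hj => hIs n₀ j hj)).symm
      have hsum_hi : α mtop = ∑ j ∈ Finset.range n, I mtop j :=
        (hk_partition_sum (hFint mtop) hp (fun j => I mtop j) (fun j hj => hIs mtop j hj)).symm
      have hlo : ∑ j ∈ Finset.range n, I n₀ j ≤ ∑ j ∈ Finset.range n, I (N (x j)) j := by
        refine Finset.sum_le_sum ?_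
        intro j hj
        have hjn := Finset.mem_range.mp hj
        exact hk_mono (hp.2.2.1 j hjn).le (hIs n₀ j hjn) (hIs (N (x j)) j hjn)
          (fun y _ => hFmono' y (hNge (x j)))
      have hhi : ∑ j ∈ Finset.range n, I (N (x j)) j ≤ ∑ j ∈ Finset.range n, I mtop j := by
        refine Finset.sum_le_sum ?_
        intro j hj
        have hjn := Finset.mem_range.mp hj
        exact hk_mono (hp.2.2.1 j hjn).le (hIs (N (x j)) j hjn) (hIs mtop j hjn)
          (fun y _ => hFmono' y (hmle j hjn))
      constructor
      · rw [hT3]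
        have := hαA n₀
        rw [hsum_lo] at hn₀
        linarith
      · rw [hT3]
        have := hαA mtop
        rw [hsum_hi] at this
        linarith
    have hfinal : |RiemannSum g' n t x - A| = |T1 + T2 + T3| := by rw [hdecomp]
    rw [hfinal, abs_lt]
    rw [abs_le] at hT1bound hT2bound
    obtain ⟨h31, h32⟩ := hT3bound
    constructor <;> linarith
  refine hk_congr_ae ?_ hgoal
  filter_upwards [hG] with y hy
  simp [hg'def, hy]
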